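/- The algebra A = 𝟙 ⊕ f (group algebra of {1,c} inside Vec_{ℤ/2×ℤ/2} with the toric code braiding) satisfies: A ⊗ A (with braided multiplication) is isomorphic as an algebra to the 2×2 matrix algebra concentrated in gradings {1, c}, and hence is Morita equivalent to the trivial algebra 𝟙. -/

import Mathlib

open CategoryTheory

/-- Structure constants of the braided tensor product algebra `A ⊗ A` for
`A = 𝟙 ⊕ f = ℂ[{1,c}]` in `Vec_{ℤ/2×ℤ/2}` with the toric code braiding (`c_{f,f} = −1`):
the basis is `|ij⟩` with `i,j ∈ {1,f}` encoded by `(i,j) ∈ (ℤ/2)²`, and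
`|ij⟩·|kl⟩ = (−2δ_{jk}δ_{j,f}+1)|i+k, j+l⟩`, i.e. the sign is `−1` exactly when
`j = k = f`. -/
def AfAfConst (p q : ZMod 2 × ZMod 2) : ℂ :=
  if p.2 = 1 ∧ q.1 = 1 then -1 else 1

/-- The `ℤ/2×ℤ/2`-grading of the basis element `|ij⟩` of `A ⊗ A`: `i` and `j` are graded
by `1` or `c = (1,1)`, so `|ij⟩` has total grade `(i+j)·c`. -/
def AfAfGrade (p : ZMod 2 × ZMod 2) : ZMod 2 × ZMod 2 :=
  (p.1 + p.2, p.1 + p.2)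

namespace AfAfAux

open Matrix

abbrev Rm : Type := Matrix (Fin 2) (Fin 2) ℂ

/-- Pauli X. -/
def Px : Rm := !![0,1;1,0]
/-- Pauli Z. -/
def Pz : Rm := !![1,0;0,-1]

/-- The family realizing the structure constants. -/
noncomputable def Fam (p : ZMod 2 × ZMod 2) : Rm :=
  (if p.1 = 1 then Px else 1) * (if p.2 = 1 then Pz else 1)

lemma Fam00 : Fam (0, 0) = 1 := by
  simp [Fam]

lemma mul_law (p q : ZMod 2 × ZMod 2) :
    Fam p * Fam q = AfAfConst p q • Fam (p + q) := by
  have h : ∀ x : ZMod 2, x = 0 ∨ x = 1 := by decide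
  obtain ⟨a, b⟩ := p; obtain ⟨c, d⟩ := q
  have e11 : (1 : ZMod 2) + 1 = 0 := by decide
  rcases h a with rfl | rfl <;> rcases h b with rfl | rfl <;>
    rcases h c with rfl | rfl <;> rcases h d with rfl | rfl <;>
      simp [Fam, AfAfConst, Prod.mk_add_mk, e11] <;>
      · ext i j
        fin_cases i <;> fin_cases j <;>
          norm_num [Px, Pz, Matrix.mul_apply, Fin.sum_univ_two, Matrix.one_apply]

lemma span_top : Submodule.span ℂ (Set.range Fam) = ⊤ := by
  rw [eq_top_iff]
  rintro M -
  have hM : M = ((M 0 0 + M 1 1) / 2) • Fam (0, 0) + ((M 0 1 + M 1 0) / 2) • Fam (1, 0)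
      + ((M 0 0 - M 1 1) / 2) • Fam (0, 1) + ((M 1 0 - M 0 1) / 2) • Fam (1, 1) := by
    have h0 : (0 : ZMod 2) ≠ 1 := by decide
    ext i j
    fin_cases i <;> fin_cases j <;>
      · simp [Fam, h0, Px, Pz, Matrix.mul_apply, Fin.sum_univ_two, Matrix.one_apply]
        ring
  rw [hM]
  have mem : ∀ p, Fam p ∈ Submodule.span ℂ (Set.range Fam) := fun p =>
    Submodule.subset_span ⟨p, rfl⟩
  exact Submodule.add_mem _ (Submodule.add_mem _ (Submodule.add_mem _
    (Submodule.smul_mem _ _ (mem _)) (Submodule.smul_mem _ _ (mem _)))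
    (Submodule.smul_mem _ _ (mem _))) (Submodule.smul_mem _ _ (mem _))

lemma lin_indep : LinearIndependent ℂ Fam := by
  apply linearIndependent_of_top_le_span_of_card_eq_finrank (span_top.ge)
  simp [Module.finrank_matrix]

/-! ## The equivalence `ModuleCat M₂(ℂ) ≌ ModuleCat ℂ` -/

variable (V : Type) [AddCommGroup V] [Module ℂ V]

/-- Action of a matrix on `Fin 2 → V`. -/
def matAct (A : Rm) (v : Fin 2 → V) : Fin 2 → V := fun i => ∑ j, A i j • v j

/-- `matAct` as a ring hom into endomorphisms. -/
def matEnd : Rm →+* Module.End ℂ (Fin 2 → V) where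
  toFun A :=
    { toFun := matAct V A
      map_add' := fun v w => by
        funext i
        simp [matAct, smul_add, Finset.sum_add_distrib]
      map_smul' := fun a v => by
        funext i
        simp [matAct, Finset.smul_sum, smul_comm a] }
  map_one' := by
    refine LinearMap.ext fun v => funext fun i => ?_
    simp [matAct, Matrix.one_apply, ite_smul]
  map_mul' A B := by
    refine LinearMap.ext fun v => funext fun i => ?_
    simp only [LinearMap.coe_mk, AddHom.coe_mk, Module.End.mul_apply,
      matAct, Matrix.mul_apply, Finset.sum_smul, Finset.smul_sum, mul_smul]
    rw [Finset.sum_comm]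
  map_zero' := by
    refine LinearMap.ext fun v => funext fun i => ?_
    simp [matAct]
  map_add' A B := by
    refine LinearMap.ext fun v => funext fun i => ?_
    simp [matAct, add_smul, Finset.sum_add_distrib]

/-- The matrix-module structure on `Fin 2 → V`. -/
noncomputable instance matModule : Module Rm (Fin 2 → V) :=
  Module.compHom _ (matEnd V)

lemma matSmul_def (A : Rm) (v : Fin 2 → V) (i : Fin 2) :
    (A • v) i = ∑ j, A i j • v j := rfl

/-- The functor `V ↦ (Fin 2 → V)` from `ℂ`-modules to `M₂(ℂ)`-modules. -/
noncomputable def Gfun : ModuleCat.{0} ℂ ⥤ ModuleCat.{0} Rm where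
  obj V := ModuleCat.of Rm (Fin 2 → V)
  map {V W} f := ModuleCat.ofHom
    { toFun := fun v i => f (v i)
      map_add' := fun v w => by funext i; simp
      map_smul' := fun A v => by
        funext i
        simp [matSmul_def] }
  map_id V := rfl
  map_comp f g := rfl


lemma smulOne (a : ℂ) (v : Fin 2 → V) : (a • (1 : Rm)) • v = a • v := by
  funext i
  simp [matSmul_def, Matrix.smul_apply, Matrix.one_apply, mul_ite, ite_smul, smul_smul]

lemma stdSmul (i : Fin 2) (v : Fin 2 → V) :
    (single (0 : Fin 2) i (1 : ℂ)) • v = fun k => if k = 0 then v i else 0 := by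
  funext k
  by_cases hk : k = 0
  · simp [matSmul_def, Matrix.single, hk, ite_and, ite_smul, Finset.sum_ite_eq,
      Finset.sum_ite_eq']
  · simp [matSmul_def, Matrix.single, hk, ite_and, ite_smul, Ne.symm hk]

variable {V}

instance Gfun_faithful : Gfun.Faithful := by
  constructor
  intro X Y f g h
  refine ModuleCat.hom_ext (LinearMap.ext fun x => ?_)
  have := congrArg (fun (k : Gfun.obj X ⟶ Gfun.obj Y) =>
    (k.hom : (Fin 2 → X) →ₗ[Rm] (Fin 2 → Y)) (fun i => if i = 0 then x else 0) 0) h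
  exact this

instance Gfun_full : Gfun.Full := by
  constructor
  intro X Y g
  let gl : (Fin 2 → X) →ₗ[Rm] (Fin 2 → Y) := g.hom
  refine ⟨ModuleCat.ofHom
    { toFun := fun x => gl (fun i => if i = 0 then x else 0) 0
      map_add' := fun x y => by
        have h0 : (fun i => if i = (0 : Fin 2) then x + y else 0)
            = (fun i => if i = 0 then x else 0) + (fun i => if i = 0 then y else 0) := by
          funext i; by_cases hi : i = 0 <;> simp [hi]
        show gl (fun i => if i = 0 then x + y else 0) 0
            = gl (fun i => if i = 0 then x else 0) 0 + gl (fun i => if i = 0 then y else 0) 0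
        rw [h0, map_add]; rfl
      map_smul' := fun a x => by
        have h1 : (fun i => if i = (0 : Fin 2) then a • x else 0)
            = (a • (1 : Rm)) • (fun i => if i = 0 then x else 0) := by
          rw [smulOne]
          funext i; by_cases hi : i = 0 <;> simp [hi]
        show gl (fun i => if i = 0 then a • x else 0) 0
            = a • gl (fun i => if i = 0 then x else 0) 0
        rw [h1, _root_.map_smul, smulOne]
        rfl }, ?_⟩
  refine ModuleCat.hom_ext (LinearMap.ext fun (v : Fin 2 → X) => funext fun i => ?_)
  show gl (fun k => if k = 0 then v i else 0) 0 = gl v i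
  rw [← stdSmul _ i v, _root_.map_smul, stdSmul]
  simp

section EssSurj

variable (M : Type) [AddCommGroup M] [Module Rm M]

/-- The subgroup `e₀₀ • M`. -/
def eGrp : AddSubgroup M where
  carrier := {x | single (0 : Fin 2) (0 : Fin 2) (1 : ℂ) • x = x}
  add_mem' := fun {a b} ha hb => by
    simp only [Set.mem_setOf_eq] at *
    rw [smul_add, ha, hb]
  zero_mem' := smul_zero _
  neg_mem' := fun {a} ha => by
    simp only [Set.mem_setOf_eq] at *
    rw [smul_neg, ha]

noncomputable instance eGrpSMul : SMul ℂ (eGrp M) :=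
  ⟨fun a x => ⟨(a • (1 : Rm)) • x.1, by
    have hx : single (0 : Fin 2) (0 : Fin 2) (1 : ℂ) • x.1 = x.1 := x.2
    show single (0 : Fin 2) (0 : Fin 2) (1 : ℂ) • (a • (1 : Rm)) • x.1 = (a • (1 : Rm)) • x.1
    have comm : single (0 : Fin 2) (0 : Fin 2) (1 : ℂ) * (a • (1 : Rm))
        = (a • (1 : Rm)) * single (0 : Fin 2) (0 : Fin 2) (1 : ℂ) := by
      rw [mul_smul_comm, smul_mul_assoc, mul_one, one_mul]
    rw [← mul_smul, comm, mul_smul, hx]⟩⟩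

lemma eGrp_smul_coe (a : ℂ) (x : eGrp M) :
    ((a • x : eGrp M) : M) = (a • (1 : Rm)) • (x : M) := rfl

noncomputable instance eGrpModule : Module ℂ (eGrp M) where
  one_smul x := Subtype.ext (by
    show ((1 : ℂ) • (1 : Rm)) • (x : M) = (x : M)
    rw [one_smul, one_smul])
  mul_smul a b x := Subtype.ext (by
    show ((a * b) • (1 : Rm)) • (x : M) = (a • (1 : Rm)) • (b • (1 : Rm)) • (x : M)
    rw [← mul_smul, smul_mul_assoc, one_mul, smul_smul])
  smul_zero a := Subtype.ext (smul_zero _)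
  smul_add a x y := Subtype.ext (smul_add _ _ _)
  add_smul a b x := Subtype.ext (by
    show ((a + b) • (1 : Rm)) • (x : M) = (a • (1 : Rm)) • (x : M) + (b • (1 : Rm)) • (x : M)
    rw [add_smul, add_smul])
  zero_smul x := Subtype.ext (by
    show ((0 : ℂ) • (1 : Rm)) • (x : M) = (0 : M)
    rw [zero_smul, zero_smul])

lemma keyMat (A : Rm) (i : Fin 2) :
    single (0 : Fin 2) i (1 : ℂ) * A
      = (A i 0 • (1 : Rm)) * single (0 : Fin 2) (0 : Fin 2) (1 : ℂ)
        + (A i 1 • (1 : Rm)) * single (0 : Fin 2) (1 : Fin 2) (1 : ℂ) := by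
  ext k l
  fin_cases i <;> fin_cases k <;> fin_cases l <;>
    simp [Matrix.mul_apply, Fin.sum_univ_two, Matrix.single, Matrix.one_apply]

lemma sumDiag : single (0 : Fin 2) (0 : Fin 2) (1 : ℂ)
    + single (1 : Fin 2) (1 : Fin 2) (1 : ℂ) = 1 := by
  ext k l
  fin_cases k <;> fin_cases l <;> simp [Matrix.single, Matrix.one_apply]

/-- The `Rm`-linear equivalence `M ≃ (Fin 2 → e₀₀M)`. -/
noncomputable def eEquiv : M ≃ₗ[Rm] (Fin 2 → eGrp M) where
  toFun x i := ⟨single (0 : Fin 2) i (1 : ℂ) • x, by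
    show single (0 : Fin 2) (0 : Fin 2) (1 : ℂ) • _ = _
    rw [← mul_smul, Matrix.single_mul_single_same, one_mul]⟩
  map_add' x y := funext fun i => Subtype.ext (smul_add _ _ _)
  map_smul' A x := by
    funext i
    refine Subtype.ext ?_
    have hr : ((A • (fun j => (⟨single (0 : Fin 2) j (1 : ℂ) • x, by
          show single (0 : Fin 2) (0 : Fin 2) (1 : ℂ) • _ = _
          rw [← mul_smul, Matrix.single_mul_single_same, one_mul]⟩ : eGrp M))) i : M)
        = (A i 0 • (1 : Rm)) • (single (0 : Fin 2) (0 : Fin 2) (1 : ℂ) • x)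
          + (A i 1 • (1 : Rm)) • (single (0 : Fin 2) (1 : Fin 2) (1 : ℂ) • x) := by
      rw [matSmul_def, Fin.sum_univ_two]
      rfl
    refine Eq.trans ?_ hr.symm
    show single (0 : Fin 2) i (1 : ℂ) • (A • x) = _
    rw [← mul_smul, keyMat A i, add_smul, mul_smul, mul_smul]
  invFun v := single (0 : Fin 2) (0 : Fin 2) (1 : ℂ) • ((v 0 : eGrp M) : M)
    + single (1 : Fin 2) (0 : Fin 2) (1 : ℂ) • ((v 1 : eGrp M) : M)
  left_inv x := by
    simp only [← mul_smul, Matrix.single_mul_single_same, one_mul]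
    rw [← add_smul, sumDiag, one_smul]
  right_inv v := by
    funext i
    refine Subtype.ext ?_
    show single (0 : Fin 2) i (1 : ℂ) • _ = ((v i : eGrp M) : M)
    rw [smul_add, ← mul_smul, ← mul_smul]
    have h2 : ∀ k : Fin 2, k = 0 ∨ k = 1 := by decide
    rcases h2 i with rfl | rfl
    · rw [Matrix.single_mul_single_same,
        Matrix.single_mul_single_of_ne (j := (0 : Fin 2)) (k := (1 : Fin 2)) (h := by decide),
        one_mul, zero_smul, add_zero]
      exact (v 0).2
    · rw [Matrix.single_mul_single_of_ne (j := (1 : Fin 2)) (k := (0 : Fin 2)) (h := by decide),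
        Matrix.single_mul_single_same,
        one_mul, zero_smul, zero_add]
      exact (v 1).2

instance Gfun_essSurj : Gfun.EssSurj := by
  constructor
  intro N
  refine ⟨ModuleCat.of ℂ (eGrp N), ⟨?_⟩⟩
  exact (eEquiv N).symm.toModuleIso ≪≫ Iso.refl _

noncomputable instance Gfun_isEquivalence : Gfun.IsEquivalence := {}

end EssSurj

end AfAfAux

/-- for `A = 𝟙 ⊕ f` in `Vec_{ℤ/2×ℤ/2}` with the toric code braiding, the
braided tensor product algebra `A ⊗ A` is isomorphic as an algebra to the 2×2 matrix
algebra `M₂(ℂ)` (via a family `F` of matrices realizing the structure constants and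
forming a basis of `M₂(ℂ)`), its basis vectors are concentrated in the gradings
`{1, c}`, and hence `A ⊗ A` is Morita equivalent to the trivial algebra `𝟙 = ℂ`
(its category of modules is equivalent to that of `ℂ`). -/
theorem AfAf_iso_matrix_morita_trivial :
    (∃ F : ZMod 2 × ZMod 2 → Matrix (Fin 2) (Fin 2) ℂ,
      F 0 = 1 ∧
      (∀ p q, F p * F q = AfAfConst p q • F (p + q)) ∧
      LinearIndependent ℂ F ∧
      Submodule.span ℂ (Set.range F) = ⊤) ∧
    (∀ p, AfAfGrade p ∈ ({0, (1, 1)} : Set (ZMod 2 × ZMod 2))) ∧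
    Nonempty (ModuleCat.{0} (Matrix (Fin 2) (Fin 2) ℂ) ≌ ModuleCat.{0} ℂ) := by
  refine ⟨⟨AfAfAux.Fam, AfAfAux.Fam00, AfAfAux.mul_law, AfAfAux.lin_indep, AfAfAux.span_top⟩,
    ?_, ?_⟩
  · intro p
    have h : ∀ x : ZMod 2 × ZMod 2, AfAfGrade x ∈ ({0, (1,1)} : Set (ZMod 2 × ZMod 2)) := by
      decide
    exact h p
  · exact ⟨AfAfAux.Gfun.asEquivalence.symm⟩
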